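/- Let n ≥ 3 and suppose K : ℝ → ℝ is Lebesgue measurable on some interval containing 1 as an interior point, K(1) ≠ 0, and K maps ℙₙ¹(ℝ) entrywise into ℙₙ¹(ℝ). Then either K is a positive constant, or there exist c > 0 and α ∈ ℝ such that K(x) = c|x|^α for all x, or K(x) = c·sgn(x)|x|^α for all x (with K(0) = 0). -/

import Mathlib

open Matrix MeasureTheory Set Pointwise

lemma psd_diag {n : ℕ} {M : Matrix (Fin n) (Fin n) ℝ} (h : M.PosSemidef) (i : Fin n) :
    0 ≤ M i i := by
  exact h.diag_nonneg

lemma vecMulVec_psd {n : ℕ} (u : Fin n → ℝ) : (Matrix.vecMulVec u u).PosSemidef := by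
  rw [Matrix.vecMulVec_eq (Fin 1)]
  have h : (Matrix.replicateCol (Fin 1) u) = (Matrix.replicateRow (Fin 1) u)ᴴ := by
    ext i j; simp [Matrix.conjTranspose_apply]
  rw [h]
  exact Matrix.posSemidef_conjTranspose_mul_self _

lemma vecMulVec_rank_le {n : ℕ} (u : Fin n → ℝ) : (Matrix.vecMulVec u u).rank ≤ 1 := by
  rw [Matrix.vecMulVec_eq (Fin 1)]
  calc (Matrix.replicateCol (Fin 1) u * Matrix.replicateRow (Fin 1) u).rank ≤ (Matrix.replicateRow (Fin 1) u).rank :=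
        Matrix.rank_mul_le_right _ _
    _ ≤ 1 := by simpa using Matrix.rank_le_card_height (Matrix.replicateRow (Fin 1) u)

lemma rank_le_one_minor {n : ℕ} (M : Matrix (Fin n) (Fin n) ℝ) (h : M.rank ≤ 1)
    (i j k l : Fin n) : M i k * M j l = M i l * M j k := by
  rw [Matrix.rank] at h
  obtain ⟨v, hv⟩ := finrank_le_one_iff.mp h
  have hcol : ∀ k : Fin n, (fun i => M i k) ∈ LinearMap.range M.mulVecLin := by
    intro k
    refine ⟨Pi.single k 1, ?_⟩
    ext i
    simp [Matrix.mulVecLin_apply, Matrix.mulVec_single]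
  obtain ⟨a, ha⟩ := hv ⟨_, hcol k⟩
  obtain ⟨b, hb⟩ := hv ⟨_, hcol l⟩
  have hak : ∀ i, M i k = a * (v : Fin n → ℝ) i := by
    intro i
    have := congrFun (congrArg Subtype.val ha) i
    simpa using this.symm
  have hbl : ∀ i, M i l = b * (v : Fin n → ℝ) i := by
    intro i
    have := congrFun (congrArg Subtype.val hb) i
    simpa using this.symm
  rw [hak i, hak j, hbl i, hbl j]; ring

lemma additive_bounded_linear (g : ℝ → ℝ) (hadd : ∀ s t, g (s + t) = g s + g t)
    (S : Set ℝ) (hS : MeasurableSet S) (hSpos : 0 < volume S)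
    (M : ℝ) (hbd : ∀ x ∈ S, |g x| ≤ M) :
    ∀ x, g x = g 1 * x := by
  have hg0 : g 0 = 0 := by have := hadd 0 0; simp at this; linarith
  have hneg : ∀ x, g (-x) = - g x := by
    intro x; have := hadd x (-x); simp [hg0] at this; linarith
  have hsub : ∀ a b, g (a - b) = g a - g b := by
    intro a b; have := hadd (a - b) b; simp at this; linarith
  have hnat : ∀ (m : ℕ) (x : ℝ), g (m * x) = m * g x := by
    intro m
    induction m with
    | zero => intro x; simpa using hg0
    | succ k ih =>
      intro x
      have : ((k : ℝ) + 1) * x = k * x + x := by ring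
      push_cast
      rw [this, hadd, ih]; ring
  have hint : ∀ (m : ℤ) (x : ℝ), g (m * x) = m * g x := by
    intro m x
    rcases le_or_gt 0 m with hm | hm
    · lift m to ℕ using hm; exact_mod_cast hnat m x
    · have hk : ((-m).toNat : ℤ) = -m := Int.toNat_of_nonneg (by omega)
      have hmk : (m : ℝ) = -(((-m).toNat : ℕ) : ℝ) := by
        have h' : ((-m).toNat : ℝ) = ((-m : ℤ) : ℝ) := by exact_mod_cast hk
        rw [h']; push_cast; ring
      rw [hmk, show (-((((-m).toNat : ℕ)) : ℝ)) * x = -(((((-m).toNat : ℕ)) : ℝ) * x) by ring,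
        hneg, hnat]
      ring
  have hrat : ∀ q : ℚ, g q = q * g 1 := by
    intro q
    have hden : (q.den : ℝ) ≠ 0 := by positivity
    have h1 : (q.den : ℝ) * (q : ℝ) = (q.num : ℝ) := by
      rw [Rat.cast_def]; field_simp
    have h2 : g ((q.den : ℝ) * (q : ℝ)) = (q.den : ℝ) * g q := hnat q.den q
    rw [h1] at h2
    have h3 : g ((q.num : ℝ)) = (q.num : ℝ) * g 1 := by
      have := hint q.num 1; simpa using this
    rw [h3] at h2
    have h5 : (q.den : ℝ) * ((q : ℝ) * g 1) = (q.den : ℝ) * g (q : ℝ) := by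
      rw [← h2, ← h1]; ring
    exact (mul_left_cancel₀ hden h5).symm
  -- Steinhaus
  have hst : S - S ∈ nhds (0 : ℝ) :=
    MeasureTheory.Measure.sub_mem_nhds_zero_of_addHaar_pos volume S hS hSpos
  obtain ⟨δ, hδpos, hδ⟩ := Metric.mem_nhds_iff.mp hst
  have hbd2 : ∀ y : ℝ, |y| < δ → |g y| ≤ 2 * M := by
    intro y hy
    have : y ∈ S - S := hδ (by simpa [Real.dist_eq] using hy)
    obtain ⟨a, ha, b, hb, rfl⟩ := this
    rw [hsub a b]
    calc |g a - g b| ≤ |g a| + |g b| := abs_sub _ _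
      _ ≤ 2 * M := by have := hbd a ha; have := hbd b hb; linarith
  have hsmall : ∀ ε : ℝ, 0 < ε → ∃ δ' : ℝ, 0 < δ' ∧ ∀ y : ℝ, |y| < δ' → |g y| ≤ ε := by
    intro ε hε
    obtain ⟨m, hm⟩ := exists_nat_gt (2 * M / ε)
    have hm1 : (0 : ℝ) < m + 1 := by positivity
    refine ⟨δ / (m + 1), by positivity, fun y hy => ?_⟩
    have h1 : |((m : ℝ) + 1) * y| < δ := by
      rw [abs_mul, abs_of_pos hm1]
      calc ((m : ℝ) + 1) * |y| < (m + 1) * (δ / (m + 1)) := by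
            exact mul_lt_mul_of_pos_left hy hm1
        _ = δ := by field_simp
    have h2 : |g (((m : ℝ) + 1) * y)| ≤ 2 * M := hbd2 _ h1
    have h3 : g (((m : ℝ) + 1) * y) = ((m : ℝ) + 1) * g y := by
      have := hnat (m + 1) y; push_cast at this; exact this
    rw [h3, abs_mul, abs_of_pos hm1] at h2
    have hM0 : 0 ≤ 2 * M := le_trans (abs_nonneg _) (hbd2 0 (by simpa using hδpos))
    have : 2 * M < ε * (m + 1) := by
      rw [div_lt_iff₀ hε] at hm
      calc 2 * M < ε * m := by linarith
        _ ≤ ε * (m + 1) := by nlinarith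
    have := h2.trans_lt this
    nlinarith [abs_nonneg (g y)]
  intro x
  have key : ∀ ε : ℝ, 0 < ε → |g x - g 1 * x| ≤ ε * (1 + |g 1|) := by
    intro ε hε
    obtain ⟨δ', hδ'pos, hδ'⟩ := hsmall ε hε
    obtain ⟨q, hq⟩ := exists_rat_near x (lt_min hδ'pos hε)
    have h1 : g x = g (x - q) + g q := by rw [← hadd]; ring_nf
    have h2 : |g (x - q)| ≤ ε := hδ' _ (hq.trans_le (min_le_left _ _))
    rw [h1, hrat]
    have h4 : |(q : ℝ) - x| ≤ ε := by
      rw [abs_sub_comm]; exact (hq.trans_le (min_le_right _ _)).le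
    calc |g (x - q) + q * g 1 - g 1 * x| = |g (x - q) + ((q : ℝ) - x) * g 1| := by ring_nf
      _ ≤ |g (x - q)| + |((q : ℝ) - x) * g 1| := abs_add_le _ _
      _ ≤ ε + ε * |g 1| := by
          rw [abs_mul]
          have := mul_le_mul_of_nonneg_right h4 (abs_nonneg (g 1))
          linarith
      _ = ε * (1 + |g 1|) := by ring
  have : |g x - g 1 * x| ≤ 0 := by
    refine le_of_forall_pos_le_add fun ε hε => ?_
    have h1 : (0 : ℝ) < 1 + |g 1| := by positivity
    have := key (ε / (1 + |g 1|)) (by positivity)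
    rw [div_mul_cancel₀] at this
    · linarith
    · exact h1.ne'
  have := abs_nonneg (g x - g 1 * x)
  have h0 : |g x - g 1 * x| = 0 := le_antisymm ‹_› ‹_›
  rw [abs_eq_zero] at h0
  linarith


noncomputable def phi (α : ℝ) (x : ℝ) : ℝ := if x = 0 then 0 else |x| ^ α

noncomputable def psi (α : ℝ) (x : ℝ) : ℝ :=
  if x = 0 then 0 else Real.sign x * |x| ^ α

theorem rank_one_preserver_classification
    (n : ℕ) (hn : 3 ≤ n)
    (I : Set ℝ) (hIconv : Convex ℝ I) (h1I : (1 : ℝ) ∈ interior I)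
    (K : ℝ → ℝ)
    (hmeas : Measurable (I.restrict K))
    (hK1 : K 1 ≠ 0)
    (hK : ∀ A : Matrix (Fin n) (Fin n) ℝ, A.PosSemidef → A.rank ≤ 1 →
      (A.map K).PosSemidef ∧ (A.map K).rank ≤ 1) :
    (∃ c : ℝ, 0 < c ∧ ∀ x : ℝ, K x = c) ∨
      ∃ c : ℝ, 0 < c ∧ ∃ α : ℝ,
        (∀ x : ℝ, K x = c * phi α x) ∨ (∀ x : ℝ, K x = c * psi α x) := by
  classical
  set i0 : Fin n := ⟨0, by omega⟩ with hi0
  set i1 : Fin n := ⟨1, by omega⟩ with hi1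
  set i2 : Fin n := ⟨2, by omega⟩ with hi2
  have h01 : i0 ≠ i1 := by simp [hi0, hi1, Fin.ext_iff]
  have h02 : i0 ≠ i2 := by simp [hi0, hi2, Fin.ext_iff]
  have h12 : i1 ≠ i2 := by simp [hi1, hi2, Fin.ext_iff]
  -- Functional equation
  have key : ∀ x y : ℝ, K (x * y) * K 1 = K x * K y := by
    intro x y
    set u : Fin n → ℝ :=
      fun i => if i = i0 then x else if i = i1 then y else if i = i2 then 1 else 0 with hu
    have hu0 : u i0 = x := by simp [hu]
    have hu1 : u i1 = y := by simp [hu, Ne.symm h01]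
    have hu2 : u i2 = 1 := by simp [hu, Ne.symm h02, Ne.symm h12]
    have h := hK _ (vecMulVec_psd u) (vecMulVec_rank_le u)
    have hm := rank_le_one_minor _ h.2 i0 i2 i1 i2
    simp only [Matrix.map_apply, Matrix.vecMulVec_apply, hu0, hu1, hu2, mul_one, one_mul] at hm
    linarith [hm]
  -- K 1 > 0
  have hK1nonneg : 0 ≤ K 1 := by
    have h := hK _ (vecMulVec_psd (fun _ : Fin n => (1 : ℝ))) (vecMulVec_rank_le _)
    have hd := psd_diag h.1 i0
    simpa [Matrix.map_apply, Matrix.vecMulVec_apply] using hd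
  have hK1pos : 0 < K 1 := lt_of_le_of_ne hK1nonneg (Ne.symm hK1)
  set f : ℝ → ℝ := fun x => K x / K 1 with hf
  have hfmul : ∀ x y, f (x * y) = f x * f y := by
    intro x y
    have := key x y
    simp only [hf]
    field_simp
    linear_combination key x y
  have hf1 : f 1 = 1 := by simp only [hf]; field_simp
  have hKx : ∀ x, K x = f x * K 1 := by intro x; simp only [hf]; field_simp
  by_cases h0 : K 0 = 0
  swap
  · -- constant case
    left
    refine ⟨K 1, hK1pos, fun x => ?_⟩
    have h := key 0 x
    rw [zero_mul] at h
    exact (mul_left_cancel₀ h0 h).symm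
  · right
    have hne : ∀ x : ℝ, x ≠ 0 → f x ≠ 0 := by
      intro x hx hzero
      have h1 : f x * f x⁻¹ = 1 := by rw [← hfmul, mul_inv_cancel₀ hx, hf1]
      rw [hzero, zero_mul] at h1
      norm_num at h1
    have hpos : ∀ x : ℝ, 0 < x → 0 < f x := by
      intro x hx
      have h1 : f x = f (Real.sqrt x) * f (Real.sqrt x) := by
        rw [← hfmul, Real.mul_self_sqrt hx.le]
      have h2 : 0 ≤ f x := by rw [h1]; exact mul_self_nonneg _
      exact lt_of_le_of_ne h2 (Ne.symm (hne x hx.ne'))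
    set g : ℝ → ℝ := fun t => Real.log (f (Real.exp t)) with hg
    have hgadd : ∀ s t, g (s + t) = g s + g t := by
      intro s t
      simp only [hg, Real.exp_add, hfmul]
      exact Real.log_mul (hpos _ (Real.exp_pos s)).ne' (hpos _ (Real.exp_pos t)).ne'
    obtain ⟨ε, hεpos, hεsub⟩ : ∃ ε > 0, Metric.ball (1 : ℝ) ε ⊆ I :=
      Metric.mem_nhds_iff.mp (mem_interior_iff_mem_nhds.mp h1I)
    set δ := Real.log (1 + ε) with hδ
    have hδpos : 0 < δ := Real.log_pos (by linarith)
    have hmap : ∀ t : ℝ, t ∈ Set.Ioo (-δ) δ → Real.exp t ∈ I := by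
      intro t ht
      apply hεsub
      rw [Metric.mem_ball, Real.dist_eq, abs_lt]
      have h2 : Real.exp (-δ) = (1 + ε)⁻¹ := by
        rw [Real.exp_neg, Real.exp_log (by linarith)]
      have h1 : (1 + ε)⁻¹ < Real.exp t := by
        rw [← h2]; exact Real.exp_lt_exp.mpr ht.1
      have h3 : Real.exp t < 1 + ε := by
        have := Real.exp_lt_exp.mpr ht.2
        rwa [Real.exp_log (by linarith)] at this
      constructor
      · have hA : 1 < (1 + ε) * Real.exp t := by
          have hinv : (1 + ε) * (1 + ε)⁻¹ = 1 := mul_inv_cancel₀ (by linarith)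
          nlinarith
        nlinarith [sq_nonneg ε, Real.exp_pos t]
      · linarith
    set S0 : Set ℝ := Set.Ioo (-δ) δ with hS0
    have hS0meas : MeasurableSet S0 := measurableSet_Ioo
    have hφ : Measurable (fun t : S0 => (⟨Real.exp t, hmap t t.2⟩ : I)) :=
      Measurable.subtype_mk (Real.measurable_exp.comp measurable_subtype_coe)
    have hrest : Measurable (fun t : S0 => g (t : ℝ)) := by
      have h1 : Measurable (fun t : S0 => K (Real.exp (t : ℝ))) := hmeas.comp hφ
      exact Real.measurable_log.comp (h1.div_const _)
    have hcover : (⋃ m : ℕ, (Subtype.val '' {t : S0 | |g (t : ℝ)| ≤ (m : ℝ)})) = S0 := by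
      ext t
      simp only [Set.mem_iUnion, Set.mem_image, Set.mem_setOf_eq]
      constructor
      · rintro ⟨m, ⟨s, hs⟩, _, rfl⟩; exact hs
      · intro ht
        exact ⟨⌈|g t|⌉₊, ⟨⟨t, ht⟩, Nat.le_ceil _, rfl⟩⟩
    have hS0vol : 0 < volume S0 := by
      rw [hS0, Real.volume_Ioo]
      exact ENNReal.ofReal_pos.mpr (by linarith)
    obtain ⟨m, hm⟩ : ∃ m : ℕ, 0 < volume (Subtype.val '' {t : S0 | |g (t : ℝ)| ≤ (m : ℝ)}) := by
      by_contra h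
      push_neg at h
      simp only [le_zero_iff] at h
      have := measure_iUnion_null (s := fun m : ℕ => Subtype.val '' {t : S0 | |g (t : ℝ)| ≤ (m : ℝ)}) h
      rw [hcover] at this
      exact hS0vol.ne' this
    have hmeasSet : MeasurableSet (Subtype.val '' {t : S0 | |g (t : ℝ)| ≤ (m : ℝ)}) := by
      apply MeasurableSet.subtype_image hS0meas
      exact measurableSet_le hrest.abs measurable_const
    have hlin := additive_bounded_linear g hgadd _ hmeasSet hm m ?_
    swap
    · rintro x ⟨t, ht, rfl⟩; exact ht
    set α := g 1 with hα
    have hfpos : ∀ x : ℝ, 0 < x → f x = x ^ α := by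
      intro x hx
      have h1 : g (Real.log x) = Real.log (f x) := by
        simp only [hg, Real.exp_log hx]
      have h2 : Real.log (f x) = α * Real.log x := by rw [← h1, hlin]
      calc f x = Real.exp (Real.log (f x)) := (Real.exp_log (hpos x hx)).symm
        _ = Real.exp (Real.log x * α) := by rw [h2, mul_comm]
        _ = x ^ α := (Real.rpow_def_of_pos hx α).symm
    have hsq : f (-1) * f (-1) = 1 := by
      rw [← hfmul]; norm_num [hf1]
    have hflip : ∀ x : ℝ, f x = f (-1) * f (-x) := by
      intro x
      rw [← hfmul]; norm_num
    rcases mul_self_eq_one_iff.mp hsq with hsgn | hsgn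
    · refine ⟨K 1, hK1pos, α, Or.inl fun x => ?_⟩
      rcases lt_trichotomy x 0 with hx | rfl | hx
      · rw [hKx x, hflip x, hsgn, one_mul, hfpos _ (by linarith)]
        simp only [phi, if_neg hx.ne, abs_of_neg hx]
        ring
      · simp [phi, h0]
      · rw [hKx x, hfpos x hx]
        simp only [phi, if_neg hx.ne', abs_of_pos hx]
        ring
    · refine ⟨K 1, hK1pos, α, Or.inr fun x => ?_⟩
      rcases lt_trichotomy x 0 with hx | rfl | hx
      · rw [hKx x, hflip x, hsgn, hfpos _ (by linarith)]
        simp only [psi, if_neg hx.ne, abs_of_neg hx, Real.sign_of_neg hx]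
        ring
      · simp [psi, h0]
      · rw [hKx x, hfpos x hx]
        simp only [psi, if_neg hx.ne', abs_of_pos hx, Real.sign_of_pos hx]
        ring
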